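/- The coproduct Δ_h is coassociative on k[Y^∞]_h: (Δ_h ⊗ Id) ∘ Δ_h = (Id ⊗ Δ_h) ∘ Δ_h. -/

import Mathlib

/-- Genus-labelled graphs: `one` is the trivial graph `1 = |`, `vee` is grafting `∨`,
and `br` is the bridge operation `⌒` (which creates a loop). -/
inductive G where
  | one : G
  | vee : G → G → G
  | br : G → G → G
deriving DecidableEq

namespace G

/-- The order of a graph: the number of internal vertices of the underlying tree. -/
def order : G → ℕ
  | one => 0
  | vee a b => order a + order b + 1
  | br a b => order a + order b + 1

/-- The genus (loop number) of a graph. -/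
def genus : G → ℕ
  | one => 0
  | vee a b => genus a + genus b
  | br a b => genus a + genus b + 1

/-- The number of free (uncontracted) leaves of a graph. -/
def freeLeaves : G → ℕ
  | one => 1
  | vee a b => freeLeaves a + freeLeaves b
  | br a b => freeLeaves a + freeLeaves b - 2

/-- A graph is regular when every bridge genuinely contracts two free leaves;
irregular graphs are those in which some leaf is involved in more than one loop
contraction. -/
def Regular : G → Prop
  | one => True
  | vee a b => Regular a ∧ Regular b
  | br a b => Regular a ∧ Regular b ∧ 1 ≤ freeLeaves a ∧ 1 ≤ freeLeaves b

end G

/-- The quantized product `∗_h` on basis graphs, with values in the free `k`-module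
`k[Y^∞]_h`: `t ∗_h 1 = 1 ∗_h t = t` and
`(t₁∘t₂) ∗_h (s₁∘'s₂) = ((t₁∘t₂) ∗_h s₁) ∘' s₂ + t₁ ∘ (t₂ ∗_h (s₁∘'s₂))`
for `∘, ∘' ∈ {∨, ⌒}`. -/
noncomputable def G.hstar (k : Type*) [CommRing k] : G → G → (G →₀ k)
  | .one, t => Finsupp.single t 1
  | .vee a b, .one => Finsupp.single (.vee a b) 1
  | .br a b, .one => Finsupp.single (.br a b) 1
  | .vee a b, .vee c d =>
      Finsupp.mapDomain (fun u => G.vee u d) (G.hstar k (.vee a b) c)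
      + Finsupp.mapDomain (fun u => G.vee a u) (G.hstar k b (.vee c d))
  | .vee a b, .br c d =>
      Finsupp.mapDomain (fun u => G.br u d) (G.hstar k (.vee a b) c)
      + Finsupp.mapDomain (fun u => G.vee a u) (G.hstar k b (.br c d))
  | .br a b, .vee c d =>
      Finsupp.mapDomain (fun u => G.vee u d) (G.hstar k (.br a b) c)
      + Finsupp.mapDomain (fun u => G.br a u) (G.hstar k b (.vee c d))
  | .br a b, .br c d =>
      Finsupp.mapDomain (fun u => G.br u d) (G.hstar k (.br a b) c)
      + Finsupp.mapDomain (fun u => G.br a u) (G.hstar k b (.br c d))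
termination_by t s => t.order + s.order
decreasing_by all_goals simp [G.order] <;> omega

/-- The bilinear extension of `∗_h` to the free `k`-module `k[Y^∞]_h`. -/
noncomputable def G.hstarL (k : Type*) [CommRing k] (x y : G →₀ k) : G →₀ k :=
  x.sum fun t a => y.sum fun s b => (a * b) • G.hstar k t s

/-- The one-loop graph `O = | ⌒ |`. -/
def G.O : G := G.br G.one G.one

/-- The one-vertex tree `T = | ∨ |`. -/
def G.T : G := G.vee G.one G.one

/-- The quantized coproduct `Δ_h : k[Y^∞]_h → k[Y^∞]_h ⊗ k[Y^∞]_h`, where the tensor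
square of the free module on `G` is modelled as the free module on `G × G`:
`Δ_h(1) = 1⊗1` and `Δ_h(t₁∘t₂) = Σ (t₁' ∗_h t₂') ⊗ (t₁'' ∘ t₂'') + (t₁∘t₂) ⊗ 1`
for `∘ ∈ {∨, ⌒}`, in Sweedler notation. -/
noncomputable def G.cop (k : Type*) [CommRing k] : G → ((G × G) →₀ k)
  | .one => Finsupp.single (.one, .one) 1
  | .vee a b =>
      ((G.cop k a).sum fun p ca => (G.cop k b).sum fun q cb =>
        (ca * cb) • Finsupp.mapDomain (fun u => (u, G.vee p.2 q.2)) (G.hstar k p.1 q.1))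
      + Finsupp.single (G.vee a b, G.one) 1
  | .br a b =>
      ((G.cop k a).sum fun p ca => (G.cop k b).sum fun q cb =>
        (ca * cb) • Finsupp.mapDomain (fun u => (u, G.br p.2 q.2)) (G.hstar k p.1 q.1))
      + Finsupp.single (G.br a b, G.one) 1

namespace CoassocAux

open Finsupp

/-- Uniform node constructor: `app true = vee`, `app false = br`. -/
def app : Bool → G → G → G
  | true => G.vee
  | false => G.br

@[simp] lemma order_app (o : Bool) (a b : G) :
    (app o a b).order = a.order + b.order + 1 := by cases o <;> rfl

lemma rep (t : G) : t = G.one ∨ ∃ o a b, t = app o a b := by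
  cases t with
  | one => exact Or.inl rfl
  | vee a b => exact Or.inr ⟨true, a, b, rfl⟩
  | br a b => exact Or.inr ⟨false, a, b, rfl⟩

variable (k : Type*) [CommRing k]

/-- Linear extension of a basis-indexed family. -/
noncomputable def lin {α γ : Type*} (g : α → (γ →₀ k)) : (α →₀ k) →ₗ[k] (γ →₀ k) :=
  Finsupp.lsum k fun a => LinearMap.toSpanSingleton k _ (g a)

@[simp] lemma lin_single {α γ : Type*} (g : α → (γ →₀ k)) (a : α) (c : k) :
    lin k g (Finsupp.single a c) = c • g a := by simp [lin]

lemma lin_apply {α γ : Type*} (g : α → (γ →₀ k)) (x : α →₀ k) :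
    lin k g x = x.sum fun a c => c • g a := rfl

/-- Bilinear extension of a basis-indexed family. -/
noncomputable def bil {α β γ : Type*} (f : α → β → (γ →₀ k)) :
    (α →₀ k) →ₗ[k] (β →₀ k) →ₗ[k] (γ →₀ k) :=
  Finsupp.lsum k fun a => LinearMap.toSpanSingleton k _ (lin k (f a))

@[simp] lemma bil_single_single {α β γ : Type*} (f : α → β → (γ →₀ k)) (a : α) (b : β)
    (c d : k) :
    bil k f (Finsupp.single a c) (Finsupp.single b d) = (c * d) • f a b := by
  simp [bil, mul_smul]

lemma bil_apply {α β γ : Type*} (f : α → β → (γ →₀ k)) (x : α →₀ k) (y : β →₀ k) :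
    bil k f x y = x.sum fun a c => y.sum fun b d => (c * d) • f a b := by
  classical
  induction x using Finsupp.induction_linear with
  | zero => simp
  | add u v hu hv =>
      rw [map_add, LinearMap.add_apply, hu, hv,
        ← Finsupp.sum_add_index' (fun a => by simp)
          (fun a c₁ c₂ => by rw [← Finsupp.sum_add]; congr 1; ext b d; rw [add_mul, add_smul])]
  | single a c =>
      rw [Finsupp.sum_single_index]
      · simp only [bil, Finsupp.lsum_single, LinearMap.toSpanSingleton_apply,
          LinearMap.smul_apply, lin_apply, Finsupp.smul_sum]
        congr 1; ext b d; rw [smul_smul]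
      · simp

-- The bilinear operations.
noncomputable def hsB : (G →₀ k) →ₗ[k] (G →₀ k) →ₗ[k] (G →₀ k) := bil k (G.hstar k)

noncomputable def grB (o : Bool) : (G →₀ k) →ₗ[k] (G →₀ k) →ₗ[k] (G →₀ k) :=
  bil k fun u v => Finsupp.single (app o u v) 1

noncomputable def extB {α β : Type*} : (α →₀ k) →ₗ[k] (β →₀ k) →ₗ[k] ((α × β) →₀ k) :=
  bil k fun a b => Finsupp.single (a, b) 1

noncomputable def psiB (o : Bool) :
    ((G × G) →₀ k) →ₗ[k] ((G × G) →₀ k) →ₗ[k] ((G × G) →₀ k) :=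
  bil k fun p q => extB k (G.hstar k p.1 q.1) (Finsupp.single (app o p.2 q.2) 1)

noncomputable def cstB : ((G × G) →₀ k) →ₗ[k] ((G × G) →₀ k) →ₗ[k] ((G × G) →₀ k) :=
  bil k fun p q => extB k (G.hstar k p.1 q.1) (G.hstar k p.2 q.2)

noncomputable def copM : (G →₀ k) →ₗ[k] ((G × G) →₀ k) := lin k (G.cop k)

noncomputable def A13 : ((G × G) →₀ k) →ₗ[k] (G →₀ k) →ₗ[k] ((G × G × G) →₀ k) :=
  bil k fun (q : G × G) (v : G) => Finsupp.single (q.1, q.2, v) 1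

noncomputable def XiB (o : Bool) :
    ((G × G × G) →₀ k) →ₗ[k] ((G × G × G) →₀ k) →ₗ[k] ((G × G × G) →₀ k) :=
  bil k fun (α β : G × G × G) =>
    extB k (G.hstar k α.1 β.1)
      (extB k (G.hstar k α.2.1 β.2.1) (Finsupp.single (app o α.2.2 β.2.2) 1))

noncomputable def D1 : ((G × G) →₀ k) →ₗ[k] ((G × G × G) →₀ k) :=
  lin k fun p => A13 k (G.cop k p.1) (Finsupp.single p.2 1)

noncomputable def D2 : ((G × G) →₀ k) →ₗ[k] ((G × G × G) →₀ k) :=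
  lin k fun p => extB k (Finsupp.single p.1 1) (G.cop k p.2)

-- basic hstar lemmas
@[simp] lemma hstar_one_left (t : G) : G.hstar k G.one t = Finsupp.single t 1 := by
  simp [G.hstar]

@[simp] lemma hstar_one_right (t : G) : G.hstar k t G.one = Finsupp.single t 1 := by
  cases t <;> simp [G.hstar]

-- mapDomain conversions
lemma mapDomain_grR (o : Bool) (d : G) (x : G →₀ k) :
    Finsupp.mapDomain (fun u => app o u d) x = grB k o x (Finsupp.single d 1) := by
  induction x using Finsupp.induction_linear with
  | zero => simp
  | add u v hu hv => rw [Finsupp.mapDomain_add, hu, hv, map_add, LinearMap.add_apply]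
  | single a c => simp [grB, Finsupp.mapDomain_single]

lemma mapDomain_grL (o : Bool) (a : G) (x : G →₀ k) :
    Finsupp.mapDomain (fun u => app o a u) x = grB k o (Finsupp.single a 1) x := by
  induction x using Finsupp.induction_linear with
  | zero => simp
  | add u v hu hv => rw [Finsupp.mapDomain_add, hu, hv, map_add]
  | single b c => simp [grB, Finsupp.mapDomain_single]

lemma mapDomain_veeR (d : G) (x : G →₀ k) :
    Finsupp.mapDomain (fun u => G.vee u d) x = grB k true x (Finsupp.single d 1) :=
  mapDomain_grR k true d x

lemma mapDomain_brR (d : G) (x : G →₀ k) :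
    Finsupp.mapDomain (fun u => G.br u d) x = grB k false x (Finsupp.single d 1) :=
  mapDomain_grR k false d x

lemma mapDomain_veeL (a : G) (x : G →₀ k) :
    Finsupp.mapDomain (fun u => G.vee a u) x = grB k true (Finsupp.single a 1) x :=
  mapDomain_grL k true a x

lemma mapDomain_brL (a : G) (x : G →₀ k) :
    Finsupp.mapDomain (fun u => G.br a u) x = grB k false (Finsupp.single a 1) x :=
  mapDomain_grL k false a x

lemma hstar_node (o o' : Bool) (a b c d : G) :
    G.hstar k (app o a b) (app o' c d)
      = grB k o' (G.hstar k (app o a b) c) (Finsupp.single d 1)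
        + grB k o (Finsupp.single a 1) (G.hstar k b (app o' c d)) := by
  cases o <;> cases o'
  · show G.hstar k (G.br a b) (G.br c d)
        = grB k false (G.hstar k (G.br a b) c) (Finsupp.single d 1)
          + grB k false (Finsupp.single a 1) (G.hstar k b (G.br c d))
    rw [G.hstar, mapDomain_brR, mapDomain_brL]
  · show G.hstar k (G.br a b) (G.vee c d)
        = grB k true (G.hstar k (G.br a b) c) (Finsupp.single d 1)
          + grB k false (Finsupp.single a 1) (G.hstar k b (G.vee c d))
    rw [G.hstar, mapDomain_veeR, mapDomain_brL]
  · show G.hstar k (G.vee a b) (G.br c d)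
        = grB k false (G.hstar k (G.vee a b) c) (Finsupp.single d 1)
          + grB k true (Finsupp.single a 1) (G.hstar k b (G.br c d))
    rw [G.hstar, mapDomain_brR, mapDomain_veeL]
  · show G.hstar k (G.vee a b) (G.vee c d)
        = grB k true (G.hstar k (G.vee a b) c) (Finsupp.single d 1)
          + grB k true (Finsupp.single a 1) (G.hstar k b (G.vee c d))
    rw [G.hstar, mapDomain_veeR, mapDomain_veeL]

@[simp] lemma hsB_single_single (t s : G) :
    hsB k (Finsupp.single t (1:k)) (Finsupp.single s 1) = G.hstar k t s := by
  simp [hsB]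

@[simp] lemma hsB_one_left (x : G →₀ k) :
    hsB k (Finsupp.single G.one 1) x = x := by
  induction x using Finsupp.induction_linear with
  | zero => simp
  | add u v hu hv => rw [map_add, hu, hv]
  | single a c => simp [hsB, Finsupp.smul_single]

@[simp] lemma hsB_one_right (x : G →₀ k) :
    hsB k x (Finsupp.single G.one 1) = x := by
  induction x using Finsupp.induction_linear with
  | zero => simp
  | add u v hu hv => rw [map_add, LinearMap.add_apply, hu, hv]
  | single a c => simp [hsB, Finsupp.smul_single]

end CoassocAux
namespace CoassocAux
open Finsupp
variable (k : Type*) [CommRing k]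

lemma order_eq_zero {t : G} (h : t.order = 0) : t = G.one := by
  cases t <;> simp [G.order] at h ⊢

lemma hsB_grR_node (o' o'' : Bool) (X : G →₀ k) (d e f : G) :
    hsB k (grB k o' X (Finsupp.single d 1)) (Finsupp.single (app o'' e f) 1)
      = grB k o'' (hsB k (grB k o' X (Finsupp.single d 1)) (Finsupp.single e 1))
          (Finsupp.single f 1)
        + grB k o' X (G.hstar k d (app o'' e f)) := by
  induction X using Finsupp.induction_linear with
  | zero => simp
  | add u v hu hv =>
      simp only [map_add, LinearMap.add_apply, hu, hv]; abel
  | single w c =>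
      rw [← Finsupp.smul_single_one w c]
      simp only [map_smul, LinearMap.smul_apply, ← smul_add]
      congr 1
      have h1 : grB k o' (Finsupp.single w (1:k)) (Finsupp.single d 1)
          = Finsupp.single (app o' w d) 1 := by simp [grB]
      rw [h1]
      simp only [hsB_single_single]
      rw [hstar_node k o' o'' w d e f]

lemma hsB_grL_node (o o'' : Bool) (a : G) (X : G →₀ k) (e f : G) :
    hsB k (grB k o (Finsupp.single a 1) X) (Finsupp.single (app o'' e f) 1)
      = grB k o'' (hsB k (grB k o (Finsupp.single a 1) X) (Finsupp.single e 1))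
          (Finsupp.single f 1)
        + grB k o (Finsupp.single a 1) (hsB k X (Finsupp.single (app o'' e f) 1)) := by
  induction X using Finsupp.induction_linear with
  | zero => simp
  | add u v hu hv =>
      simp only [map_add, LinearMap.add_apply, hu, hv]; abel
  | single w c =>
      rw [← Finsupp.smul_single_one w c]
      simp only [map_smul, LinearMap.smul_apply, ← smul_add]
      congr 1
      have h1 : grB k o (Finsupp.single a (1:k)) (Finsupp.single w 1)
          = Finsupp.single (app o a w) 1 := by simp [grB]
      rw [h1]
      simp only [hsB_single_single]
      rw [hstar_node k o o'' a w e f]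

lemma hsB_node_grR (o o'' : Bool) (a b : G) (Y : G →₀ k) (f : G) :
    hsB k (Finsupp.single (app o a b) 1) (grB k o'' Y (Finsupp.single f 1))
      = grB k o'' (hsB k (Finsupp.single (app o a b) 1) Y) (Finsupp.single f 1)
        + grB k o (Finsupp.single a 1)
            (hsB k (Finsupp.single b 1) (grB k o'' Y (Finsupp.single f 1))) := by
  induction Y using Finsupp.induction_linear with
  | zero => simp
  | add u v hu hv =>
      simp only [map_add, LinearMap.add_apply, hu, hv]; abel
  | single w c =>
      rw [← Finsupp.smul_single_one w c]
      simp only [map_smul, LinearMap.smul_apply, ← smul_add]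
      congr 1
      have h1 : grB k o'' (Finsupp.single w (1:k)) (Finsupp.single f 1)
          = Finsupp.single (app o'' w f) 1 := by simp [grB]
      rw [h1]
      simp only [hsB_single_single]
      rw [hstar_node k o o'' a b w f]

lemma hsB_node_grL (o o' : Bool) (a b c : G) (Y : G →₀ k) :
    hsB k (Finsupp.single (app o a b) 1) (grB k o' (Finsupp.single c 1) Y)
      = grB k o' (G.hstar k (app o a b) c) Y
        + grB k o (Finsupp.single a 1)
            (hsB k (Finsupp.single b 1) (grB k o' (Finsupp.single c 1) Y)) := by
  induction Y using Finsupp.induction_linear with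
  | zero => simp
  | add u v hu hv =>
      simp only [map_add, LinearMap.add_apply, hu, hv]; abel
  | single w c' =>
      rw [← Finsupp.smul_single_one w c']
      simp only [map_smul, LinearMap.smul_apply, ← smul_add]
      congr 1
      have h1 : grB k o' (Finsupp.single c (1:k)) (Finsupp.single w 1)
          = Finsupp.single (app o' c w) 1 := by simp [grB]
      rw [h1]
      simp only [hsB_single_single]
      rw [hstar_node k o o' a b c w]

lemma assoc_basis : ∀ n (t s u : G), t.order + s.order + u.order ≤ n →
    hsB k (G.hstar k t s) (Finsupp.single u 1)
      = hsB k (Finsupp.single t 1) (G.hstar k s u) := by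
  intro n
  induction n with
  | zero =>
      intro t s u h
      have ht : t = G.one := order_eq_zero (by omega)
      have hs : s = G.one := order_eq_zero (by omega)
      have hu : u = G.one := order_eq_zero (by omega)
      subst ht hs hu; simp
  | succ n ih =>
      intro t s u h
      rcases rep t with rfl | ⟨o, a, b, rfl⟩
      · simp
      rcases rep s with rfl | ⟨o', c, d, rfl⟩
      · simp
      rcases rep u with rfl | ⟨o'', e, f, rfl⟩
      · simp
      have hb1 : b.order + (app o' c d).order + (app o'' e f).order ≤ n := by
        simp [order_app] at h ⊢; omega
      have hb2 : (app o a b).order + (app o' c d).order + e.order ≤ n := by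
        simp [order_app] at h ⊢; omega
      -- LHS
      rw [hstar_node k o o' a b c d, map_add, LinearMap.add_apply,
        hsB_grR_node k o' o'' (G.hstar k (app o a b) c) d e f,
        hsB_grL_node k o o'' a (G.hstar k b (app o' c d)) e f]
      have hL : grB k o'' (hsB k (grB k o' (G.hstar k (app o a b) c) (Finsupp.single d 1))
            (Finsupp.single e 1)) (Finsupp.single f 1)
          + grB k o'' (hsB k (grB k o (Finsupp.single a 1) (G.hstar k b (app o' c d)))
            (Finsupp.single e 1)) (Finsupp.single f 1)
          = grB k o'' (hsB k (Finsupp.single (app o a b) 1) (G.hstar k (app o' c d) e))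
              (Finsupp.single f 1) := by
        rw [← LinearMap.add_apply, ← map_add, ← LinearMap.add_apply, ← map_add,
          ← hstar_node k o o' a b c d, ih _ _ _ hb2]
      -- RHS
      rw [hstar_node k o' o'' c d e f, map_add,
        hsB_node_grR k o o'' a b (G.hstar k (app o' c d) e) f,
        hsB_node_grL k o o' a b c (G.hstar k d (app o'' e f))]
      have hR : grB k o (Finsupp.single a 1) (hsB k (Finsupp.single b 1)
            (grB k o'' (G.hstar k (app o' c d) e) (Finsupp.single f 1)))
          + grB k o (Finsupp.single a 1) (hsB k (Finsupp.single b 1)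
            (grB k o' (Finsupp.single c 1) (G.hstar k d (app o'' e f))))
          = grB k o (Finsupp.single a 1)
              (hsB k (Finsupp.single b 1) (G.hstar k (app o' c d) (app o'' e f))) := by
        rw [← map_add, ← map_add, ← hstar_node k o' o'' c d e f]
      rw [ih _ _ _ hb1]
      rw [← hR]
      rw [← hL]
      abel

lemma assoc_basis' (t s u : G) :
    hsB k (G.hstar k t s) (Finsupp.single u 1)
      = hsB k (Finsupp.single t 1) (G.hstar k s u) :=
  assoc_basis k (t.order + s.order + u.order) t s u le_rfl

lemma hsB_assoc (x y z : G →₀ k) :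
    hsB k (hsB k x y) z = hsB k x (hsB k y z) := by
  induction x using Finsupp.induction_linear with
  | zero => simp
  | add u v hu hv => simp only [map_add, LinearMap.add_apply, hu, hv]
  | single a c =>
    induction y using Finsupp.induction_linear with
    | zero => simp
    | add u v hu hv =>
        simp only [map_add, LinearMap.add_apply, map_add, hu, hv]
    | single b d =>
      induction z using Finsupp.induction_linear with
      | zero => simp
      | add u v hu hv => simp only [map_add, hu, hv]
      | single e g =>
          rw [← Finsupp.smul_single_one a c, ← Finsupp.smul_single_one b d,
            ← Finsupp.smul_single_one e g]
          simp only [map_smul, LinearMap.smul_apply, hsB_single_single]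
          rw [assoc_basis' k a b e]

end CoassocAux
namespace CoassocAux
open Finsupp
variable (k : Type*) [CommRing k]

lemma mapDomain_pairR {α β : Type*} (v : β) (x : α →₀ k) :
    Finsupp.mapDomain (fun u => (u, v)) x = extB k x (Finsupp.single v 1) := by
  induction x using Finsupp.induction_linear with
  | zero => simp
  | add u w hu hw => rw [Finsupp.mapDomain_add, hu, hw, map_add, LinearMap.add_apply]
  | single a c => simp [extB, Finsupp.mapDomain_single, Finsupp.smul_single]

lemma cop_one : G.cop k G.one = Finsupp.single (G.one, G.one) 1 := by simp [G.cop]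

lemma cop_node (o : Bool) (a b : G) :
    G.cop k (app o a b)
      = psiB k o (G.cop k a) (G.cop k b) + Finsupp.single (app o a b, G.one) 1 := by
  cases o
  · show G.cop k (G.br a b) = _
    rw [G.cop, psiB, bil_apply]
    congr 1
    refine Finsupp.sum_congr fun p _ => Finsupp.sum_congr fun q _ => ?_
    rw [mapDomain_pairR]
    rfl
  · show G.cop k (G.vee a b) = _
    rw [G.cop, psiB, bil_apply]
    congr 1
    refine Finsupp.sum_congr fun p _ => Finsupp.sum_congr fun q _ => ?_
    rw [mapDomain_pairR]
    rfl

@[simp] lemma extB_single_single {α β : Type*} (a : α) (b : β) (c d : k) :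
    extB k (Finsupp.single a c) (Finsupp.single b d) = (c * d) • Finsupp.single (a, b) 1 := by
  simp [extB]

@[simp] lemma cst_one_left (x : (G × G) →₀ k) :
    cstB k (Finsupp.single (G.one, G.one) 1) x = x := by
  induction x using Finsupp.induction_linear with
  | zero => simp
  | add u v hu hv => rw [map_add, hu, hv]
  | single p c =>
      simp [cstB, Finsupp.smul_single]

@[simp] lemma cst_one_right (x : (G × G) →₀ k) :
    cstB k x (Finsupp.single (G.one, G.one) 1) = x := by
  induction x using Finsupp.induction_linear with
  | zero => simp
  | add u v hu hv => rw [map_add, LinearMap.add_apply, hu, hv]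
  | single p c =>
      simp [cstB, Finsupp.smul_single]

@[simp] lemma copM_single (t : G) : copM k (Finsupp.single t (1:k)) = G.cop k t := by
  simp [copM]

lemma copM_grR (o' : Bool) (X : G →₀ k) (d : G) :
    copM k (grB k o' X (Finsupp.single d 1))
      = psiB k o' (copM k X) (G.cop k d)
        + extB k (grB k o' X (Finsupp.single d 1)) (Finsupp.single G.one 1) := by
  induction X using Finsupp.induction_linear with
  | zero => simp
  | add u v hu hv =>
      simp only [map_add, LinearMap.add_apply, hu, hv]; abel
  | single w c =>
      rw [← Finsupp.smul_single_one w c]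
      simp only [map_smul, LinearMap.smul_apply, ← smul_add]
      congr 1
      have h1 : grB k o' (Finsupp.single w (1:k)) (Finsupp.single d 1)
          = Finsupp.single (app o' w d) 1 := by simp [grB]
      rw [h1]
      simp only [copM_single]
      rw [cop_node k o' w d, extB_single_single]
      simp

lemma copM_grL (o : Bool) (a : G) (Y : G →₀ k) :
    copM k (grB k o (Finsupp.single a 1) Y)
      = psiB k o (G.cop k a) (copM k Y)
        + extB k (grB k o (Finsupp.single a 1) Y) (Finsupp.single G.one 1) := by
  induction Y using Finsupp.induction_linear with
  | zero => simp
  | add u v hu hv =>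
      simp only [map_add, LinearMap.add_apply, hu, hv]; abel
  | single w c =>
      rw [← Finsupp.smul_single_one w c]
      simp only [map_smul, LinearMap.smul_apply, ← smul_add]
      congr 1
      have h1 : grB k o (Finsupp.single a (1:k)) (Finsupp.single w 1)
          = Finsupp.single (app o a w) 1 := by simp [grB]
      rw [h1]
      simp only [copM_single]
      rw [cop_node k o a w, extB_single_single]
      simp

-- structural computation lemmas
lemma psi_ext_sR (o : Bool) (x y : G →₀ k) (q : G × G) :
    psiB k o (extB k x y) (Finsupp.single q 1)
      = extB k (hsB k x (Finsupp.single q.1 1)) (grB k o y (Finsupp.single q.2 1)) := by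
  induction x using Finsupp.induction_linear with
  | zero => simp
  | add u v hu hv => simp only [map_add, LinearMap.add_apply, hu, hv]
  | single a c =>
    induction y using Finsupp.induction_linear with
    | zero => simp
    | add u v hu hv => simp only [map_add, LinearMap.add_apply, hu, hv]
    | single b d =>
        rw [← Finsupp.smul_single_one a c, ← Finsupp.smul_single_one b d]
        simp only [map_smul, LinearMap.smul_apply]
        congr 1; congr 1
        simp [psiB, extB, grB, hsB]

lemma psi_s_ext (o : Bool) (p : G × G) (x y : G →₀ k) :
    psiB k o (Finsupp.single p 1) (extB k x y)
      = extB k (hsB k (Finsupp.single p.1 1) x) (grB k o (Finsupp.single p.2 1) y) := by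
  induction x using Finsupp.induction_linear with
  | zero => simp
  | add u v hu hv => simp only [map_add, LinearMap.add_apply, hu, hv]
  | single a c =>
    induction y using Finsupp.induction_linear with
    | zero => simp
    | add u v hu hv => simp only [map_add, LinearMap.add_apply, hu, hv]
    | single b d =>
        rw [← Finsupp.smul_single_one a c, ← Finsupp.smul_single_one b d]
        simp only [map_smul, LinearMap.smul_apply]
        congr 1; congr 1
        simp [psiB, extB, grB, hsB]

lemma cst_ext_sR (x : G →₀ k) (v : G) (q : G × G) :
    cstB k (extB k x (Finsupp.single v 1)) (Finsupp.single q 1)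
      = extB k (hsB k x (Finsupp.single q.1 1)) (G.hstar k v q.2) := by
  induction x using Finsupp.induction_linear with
  | zero => simp
  | add u w hu hw => simp only [map_add, LinearMap.add_apply, hu, hw]
  | single a c =>
      rw [← Finsupp.smul_single_one a c]
      simp only [map_smul, LinearMap.smul_apply]
      congr 1
      simp [cstB, extB, hsB]

lemma cst_s_ext (p : G × G) (x : G →₀ k) (v : G) :
    cstB k (Finsupp.single p 1) (extB k x (Finsupp.single v 1))
      = extB k (hsB k (Finsupp.single p.1 1) x) (G.hstar k p.2 v) := by
  induction x using Finsupp.induction_linear with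
  | zero => simp
  | add u w hu hw => simp only [map_add, LinearMap.add_apply, hu, hw]
  | single a c =>
      rw [← Finsupp.smul_single_one a c]
      simp only [map_smul, LinearMap.smul_apply]
      congr 1
      simp [cstB, extB, hsB]

lemma cst_ext_ext (x y : G →₀ k) (v w : G) :
    cstB k (extB k x (Finsupp.single v 1)) (extB k y (Finsupp.single w 1))
      = extB k (hsB k x y) (G.hstar k v w) := by
  induction y using Finsupp.induction_linear with
  | zero => simp
  | add u z hu hz => simp only [map_add, LinearMap.add_apply, hu, hz]
  | single b d =>
      rw [← Finsupp.smul_single_one b d]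
      simp only [map_smul, LinearMap.smul_apply]
      congr 1
      have h2 : extB k (Finsupp.single b (1:k)) (Finsupp.single w 1)
          = Finsupp.single (b, w) 1 := by simp
      rw [h2]
      exact cst_ext_sR k x v (b, w)

end CoassocAux
namespace CoassocAux
open Finsupp
variable (k : Type*) [CommRing k]

lemma psiB_single_single (o : Bool) (p q : G × G) :
    psiB k o (Finsupp.single p (1:k)) (Finsupp.single q 1)
      = extB k (G.hstar k p.1 q.1) (Finsupp.single (app o p.2 q.2) 1) := by
  simp [psiB]

lemma cst_psi_psi (o o' : Bool) (X Y Z W : (G × G) →₀ k) :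
    cstB k (psiB k o X Y) (psiB k o' Z W)
      = psiB k o' (cstB k (psiB k o X Y) Z) W
        + psiB k o X (cstB k Y (psiB k o' Z W)) := by
  induction X using Finsupp.induction_linear with
  | zero => simp
  | add u v hu hv => simp only [map_add, LinearMap.add_apply, hu, hv]; abel
  | single p cp =>
  induction Y using Finsupp.induction_linear with
  | zero => simp
  | add u v hu hv => simp only [map_add, LinearMap.add_apply, hu, hv]; abel
  | single q cq =>
  induction Z using Finsupp.induction_linear with
  | zero => simp
  | add u v hu hv => simp only [map_add, LinearMap.add_apply, hu, hv]; abel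
  | single r cr =>
  induction W using Finsupp.induction_linear with
  | zero => simp
  | add u v hu hv => simp only [map_add, LinearMap.add_apply, hu, hv]; abel
  | single s cs =>
      rw [← Finsupp.smul_single_one p cp, ← Finsupp.smul_single_one q cq,
        ← Finsupp.smul_single_one r cr, ← Finsupp.smul_single_one s cs]
      simp only [map_smul, LinearMap.smul_apply, ← smul_add]
      congr 1; congr 1; congr 1; congr 1
      rw [psiB_single_single k o p q, psiB_single_single k o' r s, cst_ext_ext,
        cst_ext_sR, psi_ext_sR, cst_s_ext, psi_s_ext,
        hstar_node k o o' p.2 q.2 r.2 s.2, map_add]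
      simp only [← hsB_single_single, hsB_assoc]

lemma cst_psi_unit (o : Bool) (X Y : (G × G) →₀ k) (s : G) :
    cstB k (psiB k o X Y) (Finsupp.single (s, G.one) 1)
      = psiB k o X (cstB k Y (Finsupp.single (s, G.one) 1)) := by
  induction X using Finsupp.induction_linear with
  | zero => simp
  | add u v hu hv => simp only [map_add, LinearMap.add_apply, hu, hv]
  | single p cp =>
  induction Y using Finsupp.induction_linear with
  | zero => simp
  | add u v hu hv => simp only [map_add, LinearMap.add_apply, hu, hv]
  | single q cq =>
      rw [← Finsupp.smul_single_one p cp, ← Finsupp.smul_single_one q cq]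
      simp only [map_smul, LinearMap.smul_apply]
      congr 1; congr 1
      rw [psiB_single_single k o p q, cst_ext_sR]
      have h2 : cstB k (Finsupp.single q (1:k)) (Finsupp.single (s, G.one) 1)
          = extB k (G.hstar k q.1 s) (Finsupp.single q.2 1) := by
        simp [cstB]
      rw [h2, psi_s_ext]
      have h3 : grB k o (Finsupp.single p.2 (1:k)) (Finsupp.single q.2 1)
          = Finsupp.single (app o p.2 q.2) 1 := by simp [grB]
      rw [h3]
      show extB k _ ((G.hstar k (app o p.2 q.2) G.one)) = _
      rw [hstar_one_right]
      simp only [← hsB_single_single, hsB_assoc]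

lemma cst_unit_psi (o' : Bool) (t : G) (Z W : (G × G) →₀ k) :
    cstB k (Finsupp.single (t, G.one) 1) (psiB k o' Z W)
      = psiB k o' (cstB k (Finsupp.single (t, G.one) 1) Z) W := by
  induction Z using Finsupp.induction_linear with
  | zero => simp
  | add u v hu hv => simp only [map_add, LinearMap.add_apply, hu, hv]
  | single r cr =>
  induction W using Finsupp.induction_linear with
  | zero => simp
  | add u v hu hv => simp only [map_add, LinearMap.add_apply, hu, hv]
  | single s cs =>
      rw [← Finsupp.smul_single_one r cr, ← Finsupp.smul_single_one s cs]
      simp only [map_smul, LinearMap.smul_apply]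
      congr 1; congr 1
      rw [psiB_single_single k o' r s, cst_s_ext]
      have h2 : cstB k (Finsupp.single (t, G.one) (1:k)) (Finsupp.single r 1)
          = extB k (G.hstar k t r.1) (Finsupp.single r.2 1) := by
        simp [cstB]
      rw [h2, psi_ext_sR]
      show extB k _ (G.hstar k G.one (app o' r.2 s.2)) = _
      rw [hstar_one_left]
      have h3 : grB k o' (Finsupp.single r.2 (1:k)) (Finsupp.single s.2 1)
          = Finsupp.single (app o' r.2 s.2) 1 := by simp [grB]
      rw [h3]
      simp only [← hsB_single_single, hsB_assoc]

lemma mult : ∀ n (t s : G), t.order + s.order ≤ n →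
    copM k (G.hstar k t s) = cstB k (G.cop k t) (G.cop k s) := by
  intro n
  induction n with
  | zero =>
      intro t s h
      have ht : t = G.one := order_eq_zero (by omega)
      have hs : s = G.one := order_eq_zero (by omega)
      subst ht hs
      simp [cop_one]
  | succ n ih =>
      intro t s h
      rcases rep t with rfl | ⟨o, a, b, rfl⟩
      · rw [hstar_one_left, copM_single, cop_one, cst_one_left]
      rcases rep s with rfl | ⟨o', c, d, rfl⟩
      · rw [hstar_one_right, copM_single, cop_one, cst_one_right]
      have hb1 : (app o a b).order + c.order ≤ n := by
        simp [order_app] at h ⊢; omega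
      have hb2 : b.order + (app o' c d).order ≤ n := by
        simp [order_app] at h ⊢; omega
      rw [hstar_node k o o' a b c d, map_add,
        copM_grR k o' (G.hstar k (app o a b) c) d,
        copM_grL k o a (G.hstar k b (app o' c d)),
        ih _ _ hb1, ih _ _ hb2]
      have hcomb : extB k (grB k o' (G.hstar k (app o a b) c) (Finsupp.single d 1))
            (Finsupp.single G.one 1)
          + extB k (grB k o (Finsupp.single a 1) (G.hstar k b (app o' c d)))
            (Finsupp.single G.one 1)
          = extB k (G.hstar k (app o a b) (app o' c d)) (Finsupp.single G.one 1) := by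
        rw [← LinearMap.add_apply, ← map_add, ← hstar_node k o o' a b c d]
      have hunit : cstB k (Finsupp.single (app o a b, G.one) 1)
            (Finsupp.single (app o' c d, G.one) 1)
          = extB k (G.hstar k (app o a b) (app o' c d)) (Finsupp.single G.one 1) := by
        simp [cstB]
      have hR : cstB k (G.cop k (app o a b)) (G.cop k (app o' c d))
          = psiB k o' (cstB k (G.cop k (app o a b)) (G.cop k c)) (G.cop k d)
            + psiB k o (G.cop k a) (cstB k (G.cop k b) (G.cop k (app o' c d)))
            + extB k (G.hstar k (app o a b) (app o' c d)) (Finsupp.single G.one 1) := by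
        conv_lhs => rw [cop_node k o a b, cop_node k o' c d]
        simp only [map_add, LinearMap.add_apply]
        rw [cst_psi_psi k o o' (G.cop k a) (G.cop k b) (G.cop k c) (G.cop k d)]
        rw [cst_psi_unit k o (G.cop k a) (G.cop k b) (app o' c d)]
        rw [cst_unit_psi k o' (app o a b) (G.cop k c) (G.cop k d)]
        rw [hunit]
        conv_rhs => rw [cop_node k o a b, cop_node k o' c d]
        simp only [map_add, LinearMap.add_apply]
        abel
      rw [hR, ← hcomb]
      abel

lemma mult' (t s : G) :
    copM k (G.hstar k t s) = cstB k (G.cop k t) (G.cop k s) :=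
  mult k (t.order + s.order) t s le_rfl

end CoassocAux
namespace CoassocAux
open Finsupp
variable (k : Type*) [CommRing k]

lemma mapDomain_A13 (v : G) (X : (G × G) →₀ k) :
    Finsupp.mapDomain (fun q : G × G => (q.1, q.2, v)) X
      = A13 k X (Finsupp.single v 1) := by
  induction X using Finsupp.induction_linear with
  | zero => simp
  | add u w hu hw => rw [Finsupp.mapDomain_add, hu, hw, map_add, LinearMap.add_apply]
  | single q c => simp [A13, Finsupp.mapDomain_single, Finsupp.smul_single]

lemma mapDomain_pairL (u : G) (X : (G × G) →₀ k) :
    Finsupp.mapDomain (fun q : G × G => (u, q.1, q.2)) X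
      = extB k (Finsupp.single u 1) X := by
  induction X using Finsupp.induction_linear with
  | zero => simp
  | add x y hx hy => rw [Finsupp.mapDomain_add, hx, hy, map_add]
  | single q c => simp [extB, Finsupp.mapDomain_single, Finsupp.smul_single]

lemma D1_single (p : G × G) :
    D1 k (Finsupp.single p 1) = A13 k (G.cop k p.1) (Finsupp.single p.2 1) := by
  simp [D1]

lemma D2_single (p : G × G) :
    D2 k (Finsupp.single p 1) = extB k (Finsupp.single p.1 1) (G.cop k p.2) := by
  simp [D2]

lemma D1_unit (t : G) :
    D1 k (Finsupp.single (t, G.one) 1) = A13 k (G.cop k t) (Finsupp.single G.one 1) := by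
  simp [D1]

lemma D2_unit (t : G) :
    D2 k (Finsupp.single (t, G.one) 1)
      = A13 k (Finsupp.single (t, G.one) 1) (Finsupp.single G.one 1) := by
  simp [D2, A13, cop_one, extB, Finsupp.smul_single]

lemma A13_ext (x : G →₀ k) (y : G →₀ k) (v : G) :
    A13 k (extB k x y) (Finsupp.single v 1)
      = extB k x (extB k y (Finsupp.single v 1)) := by
  induction x using Finsupp.induction_linear with
  | zero => simp
  | add u w hu hw => simp only [map_add, LinearMap.add_apply, hu, hw]
  | single a c =>
    induction y using Finsupp.induction_linear with
    | zero => simp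
    | add u w hu hw => simp only [map_add, LinearMap.add_apply, hu, hw]
    | single b d =>
        have h1 : A13 k (Finsupp.single ((a, b) : G × G) (1:k)) (Finsupp.single v 1)
            = Finsupp.single (a, b, v) 1 := by simp [A13]
        have h2 : extB k (Finsupp.single b (1:k)) (Finsupp.single v 1)
            = Finsupp.single ((b, v) : G × G) 1 := by simp [extB]
        have h3 : extB k (Finsupp.single a (1:k)) (Finsupp.single ((b, v) : G × G) 1)
            = Finsupp.single (a, b, v) 1 := by simp [extB]
        rw [← Finsupp.smul_single_one a c, ← Finsupp.smul_single_one b d]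
        simp only [map_smul, LinearMap.smul_apply, extB_single_single, one_mul,
          mul_one, one_smul]
        rw [h1]

lemma D1_ext (x : G →₀ k) (v : G) :
    D1 k (extB k x (Finsupp.single v 1)) = A13 k (copM k x) (Finsupp.single v 1) := by
  induction x using Finsupp.induction_linear with
  | zero => simp
  | add u w hu hw => simp only [map_add, LinearMap.add_apply, hu, hw]
  | single a c => simp [D1, extB, copM, Finsupp.smul_single]

lemma D2_ext (x : G →₀ k) (v : G) :
    D2 k (extB k x (Finsupp.single v 1)) = extB k x (G.cop k v) := by
  induction x using Finsupp.induction_linear with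
  | zero => simp
  | add u w hu hw => simp only [map_add, LinearMap.add_apply, hu, hw]
  | single a c =>
      rw [← Finsupp.smul_single_one a c]
      simp only [map_smul, LinearMap.smul_apply]
      congr 1
      simp [extB_single_single, D2_single]

lemma Xi_A13 (o : Bool) (x y : (G × G) →₀ k) (v w : G) :
    XiB k o (A13 k x (Finsupp.single v 1)) (A13 k y (Finsupp.single w 1))
      = A13 k (cstB k x y) (Finsupp.single (app o v w) 1) := by
  induction x using Finsupp.induction_linear with
  | zero => simp
  | add u z hu hz => simp only [map_add, LinearMap.add_apply, hu, hz]
  | single p c =>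
    induction y using Finsupp.induction_linear with
    | zero => simp
    | add u z hu hz => simp only [map_add, LinearMap.add_apply, hu, hz]
    | single q d =>
        rw [← Finsupp.smul_single_one p c, ← Finsupp.smul_single_one q d]
        simp only [map_smul, LinearMap.smul_apply]
        congr 1; congr 1
        have h1 : A13 k (Finsupp.single p (1:k)) (Finsupp.single v 1)
            = Finsupp.single (p.1, p.2, v) 1 := by simp [A13]
        have h2 : A13 k (Finsupp.single q (1:k)) (Finsupp.single w 1)
            = Finsupp.single (q.1, q.2, w) 1 := by simp [A13]
        have h3 : cstB k (Finsupp.single p (1:k)) (Finsupp.single q 1)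
            = extB k (G.hstar k p.1 q.1) (G.hstar k p.2 q.2) := by simp [cstB]
        rw [h1, h2, h3, A13_ext]
        simp [XiB]

lemma Xi_ext (o : Bool) (u v : G) (X Y : (G × G) →₀ k) :
    XiB k o (extB k (Finsupp.single u 1) X) (extB k (Finsupp.single v 1) Y)
      = extB k (G.hstar k u v) (psiB k o X Y) := by
  induction X using Finsupp.induction_linear with
  | zero => simp
  | add x y hx hy => simp only [map_add, LinearMap.add_apply, hx, hy]
  | single r c =>
    induction Y using Finsupp.induction_linear with
    | zero => simp
    | add x y hx hy => simp only [map_add, LinearMap.add_apply, hx, hy]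
    | single s d =>
        rw [← Finsupp.smul_single_one r c, ← Finsupp.smul_single_one s d]
        simp only [map_smul, LinearMap.smul_apply]
        congr 1; congr 1
        have h1 : extB k (Finsupp.single u (1:k)) (Finsupp.single r 1)
            = Finsupp.single (u, r.1, r.2) 1 := by simp [extB]
        have h2 : extB k (Finsupp.single v (1:k)) (Finsupp.single s 1)
            = Finsupp.single (v, s.1, s.2) 1 := by simp [extB]
        rw [h1, h2, psiB_single_single]
        simp [XiB]

lemma D1_psi (o : Bool) (X Y : (G × G) →₀ k) :
    D1 k (psiB k o X Y) = XiB k o (D1 k X) (D1 k Y) := by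
  induction X using Finsupp.induction_linear with
  | zero => simp
  | add x y hx hy => simp only [map_add, LinearMap.add_apply, hx, hy]
  | single p c =>
    induction Y using Finsupp.induction_linear with
    | zero => simp
    | add x y hx hy => simp only [map_add, LinearMap.add_apply, hx, hy]
    | single q d =>
        rw [← Finsupp.smul_single_one p c, ← Finsupp.smul_single_one q d]
        simp only [map_smul, LinearMap.smul_apply]
        congr 1; congr 1
        rw [psiB_single_single, D1_ext, mult' k p.1 q.1, ← Xi_A13, D1_single, D1_single]

lemma D2_psi (o : Bool) (X Y : (G × G) →₀ k) :
    D2 k (psiB k o X Y)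
      = XiB k o (D2 k X) (D2 k Y) + A13 k (psiB k o X Y) (Finsupp.single G.one 1) := by
  induction X using Finsupp.induction_linear with
  | zero => simp
  | add x y hx hy => simp only [map_add, LinearMap.add_apply, hx, hy]; abel
  | single p c =>
    induction Y using Finsupp.induction_linear with
    | zero => simp
    | add x y hx hy => simp only [map_add, LinearMap.add_apply, hx, hy]; abel
    | single q d =>
        rw [← Finsupp.smul_single_one p c, ← Finsupp.smul_single_one q d]
        simp only [map_smul, LinearMap.smul_apply, ← smul_add]
        congr 1; congr 1
        rw [psiB_single_single, D2_ext, cop_node k o p.2 q.2, map_add,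
          ← Xi_ext, A13_ext]
        have h4 : extB k (Finsupp.single (app o p.2 q.2) (1:k)) (Finsupp.single G.one 1)
            = Finsupp.single (app o p.2 q.2, G.one) 1 := by simp [extB]
        rw [h4, D2_single, D2_single]

lemma coassoc_node (o : Bool) (a b : G)
    (iha : D1 k (G.cop k a) = D2 k (G.cop k a))
    (ihb : D1 k (G.cop k b) = D2 k (G.cop k b)) :
    D1 k (G.cop k (app o a b)) = D2 k (G.cop k (app o a b)) := by
  rw [cop_node k o a b, map_add, map_add, D1_psi, D2_psi, iha, ihb,
    D1_unit, D2_unit]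
  rw [cop_node k o a b, map_add, LinearMap.add_apply]
  abel

theorem coassoc (t : G) : D1 k (G.cop k t) = D2 k (G.cop k t) := by
  induction t with
  | one => simp [cop_one, D1, D2, A13, extB, Finsupp.smul_single]
  | vee a b iha ihb => exact coassoc_node k true a b iha ihb
  | br a b iha ihb => exact coassoc_node k false a b iha ihb

end CoassocAux
/-- The coproduct `Δ_h` is coassociative on `k[Y^∞]_h`:
`(Δ_h ⊗ Id) ∘ Δ_h = (Id ⊗ Δ_h) ∘ Δ_h`, in the free-module-on-products model of the
tensor powers. -/
theorem stmt13 (k : Type*) [CommRing k] [CharZero k] (t : G) :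
    ((G.cop k t).sum fun p c =>
        c • Finsupp.mapDomain (fun q : G × G => (q.1, q.2, p.2)) (G.cop k p.1)) =
      ((G.cop k t).sum fun p c =>
        c • Finsupp.mapDomain (fun q : G × G => (p.1, q.1, q.2)) (G.cop k p.2)) := by
  have h1 : ((G.cop k t).sum fun p c =>
        c • Finsupp.mapDomain (fun q : G × G => (q.1, q.2, p.2)) (G.cop k p.1))
      = CoassocAux.D1 k (G.cop k t) := by
    rw [CoassocAux.D1, CoassocAux.lin_apply]
    exact Finsupp.sum_congr fun p _ => by rw [CoassocAux.mapDomain_A13]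
  have h2 : ((G.cop k t).sum fun p c =>
        c • Finsupp.mapDomain (fun q : G × G => (p.1, q.1, q.2)) (G.cop k p.2))
      = CoassocAux.D2 k (G.cop k t) := by
    rw [CoassocAux.D2, CoassocAux.lin_apply]
    exact Finsupp.sum_congr fun p _ => by rw [CoassocAux.mapDomain_pairL]
  rw [h1, h2, CoassocAux.coassoc]
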